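/- For every integer n ≥ 1, the total domination number of the (n+1)-dimensional hypercube equals twice the domination number of the n-dimensional hypercube: γ_t(Q_{n+1}) = 2·γ(Q_n). -/

import Mathlib

open SimpleGraph

/-- The complete graph on two vertices. -/
abbrev K2 : SimpleGraph (Fin 2) := ⊤

/-- `S` is a dominating set of `G`: every vertex not in `S` is adjacent to a vertex of `S`. -/
def IsDominatingSet {V : Type*} (G : SimpleGraph V) (S : Finset V) : Prop :=
  ∀ v : V, v ∉ S → ∃ u ∈ S, G.Adj v u

/-- `S` is a total dominating set of `G`: every vertex is adjacent to a vertex of `S`. -/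
def IsTotalDominatingSet {V : Type*} (G : SimpleGraph V) (S : Finset V) : Prop :=
  ∀ v : V, ∃ u ∈ S, G.Adj v u

/-- The domination number of `G`. -/
noncomputable def dominationNumber {V : Type*} (G : SimpleGraph V) : ℕ :=
  sInf {n : ℕ | ∃ S : Finset V, IsDominatingSet G S ∧ S.card = n}

/-- The total domination number of `G`. -/
noncomputable def totalDominationNumber {V : Type*} (G : SimpleGraph V) : ℕ :=
  sInf {n : ℕ | ∃ S : Finset V, IsTotalDominatingSet G S ∧ S.card = n}

/-- The `n`-dimensional hypercube: vertices are binary strings of length `n`,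
two vertices are adjacent iff they differ in exactly one coordinate. -/
def hypercube (n : ℕ) : SimpleGraph (Fin n → Bool) where
  Adj x y := hammingDist x y = 1
  symm := ⟨fun x y h => by simpa [hammingDist_comm] using h⟩
  loopless := ⟨fun x h => by simp [hammingDist_self] at h⟩

section Aux

lemma hamming_snoc {n : ℕ} (a c : Fin n → Bool) (b d : Bool) :
    hammingDist (Fin.snoc a b : Fin (n+1) → Bool) (Fin.snoc c d) =
      hammingDist a c + (if b = d then 0 else 1) := by
  classical
  simp only [hammingDist, Finset.card_filter]
  rw [Fin.sum_univ_castSucc]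
  simp [Fin.snoc_castSucc, Fin.snoc_last]

def par {n : ℕ} (x : Fin n → Bool) : ZMod 2 := ∑ i, if x i then 1 else 0

lemma par_snoc {n : ℕ} (a : Fin n → Bool) (b : Bool) :
    par (Fin.snoc a b : Fin (n+1) → Bool) = par a + (if b then 1 else 0) := by
  simp only [par]
  rw [Fin.sum_univ_castSucc]
  simp [Fin.snoc_castSucc, Fin.snoc_last]

lemma hamming_snoc' {n : ℕ} (v : Fin (n+1) → Bool) (c : Fin n → Bool) (d : Bool) :
    hammingDist v (Fin.snoc c d : Fin (n+1) → Bool) =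
      hammingDist (Fin.init v) c + (if v (Fin.last n) = d then 0 else 1) := by
  conv_lhs => rw [← Fin.snoc_init_self v]
  rw [hamming_snoc]

lemma snoc_injective {n : ℕ} (b : Bool) :
    Function.Injective (fun a : Fin n → Bool => (Fin.snoc a b : Fin (n+1) → Bool)) := by
  intro a a' h
  funext i
  have := congrFun h i.castSucc
  simpa [Fin.snoc_castSucc] using this

lemma par_add_par {n : ℕ} (x y : Fin n → Bool) :
    par x + par y = (hammingDist x y : ZMod 2) := by
  classical
  simp only [par, hammingDist, Finset.card_filter, Nat.cast_sum, ← Finset.sum_add_distrib]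
  congr 1; funext i
  cases hx : x i <;> cases hy : y i <;> simp [hx, hy] <;> decide

lemma adj_par {n : ℕ} {x y : Fin n → Bool} (h : hammingDist x y = 1) : par x ≠ par y := by
  have h2 := par_add_par x y
  rw [h] at h2
  intro he
  rw [he] at h2
  revert h2
  generalize par y = p
  revert p; decide

lemma zmod2_resolve {p c : ZMod 2} (h : p ≠ c + 1) : p = c := by revert p c; decide

/-- layer projection is dominating -/
lemma dom_of_layer (n : ℕ) (c : ZMod 2) (T : Finset (Fin (n+1) → Bool))
    (hT : IsTotalDominatingSet (hypercube (n+1)) T) :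
    IsDominatingSet (hypercube n) ((T.filter (fun u => par u = c)).image Fin.init) := by
  classical
  intro w hw
  set b : Bool := if par w = c + 1 then false else true with hb
  have hv : par (Fin.snoc w b : Fin (n+1) → Bool) = c + 1 := by
    rw [par_snoc, hb]
    by_cases h : par w = c + 1
    · simp [h]
    · simp only [if_neg h]
      have := zmod2_resolve (c := c) h
      rw [this]; simp
  obtain ⟨u, hu, hadj⟩ := hT (Fin.snoc w b)
  have hadj' : hammingDist (Fin.snoc w b : Fin (n+1) → Bool) u = 1 := hadj
  have hpu : par u = c := by
    apply zmod2_resolve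
    intro h
    exact adj_par hadj' (by rw [hv, h])
  have husnoc : (Fin.snoc (Fin.init u) (u (Fin.last n)) : Fin (n+1) → Bool) = u :=
    Fin.snoc_init_self u
  have hdist : hammingDist w (Fin.init u) + (if b = u (Fin.last n) then 0 else 1) = 1 := by
    rw [← hamming_snoc, husnoc]; exact hadj'
  have hmem : Fin.init u ∈ (T.filter (fun u => par u = c)).image Fin.init :=
    Finset.mem_image_of_mem _ (Finset.mem_filter.mpr ⟨hu, hpu⟩)
  refine ⟨Fin.init u, hmem, ?_⟩
  show hammingDist w (Fin.init u) = 1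
  by_cases hbe : b = u (Fin.last n)
  · simpa [hbe] using hdist
  · exfalso
    rw [if_neg hbe] at hdist
    have h0 : hammingDist w (Fin.init u) = 0 := by omega
    have : w = Fin.init u := hammingDist_eq_zero.mp h0
    exact hw (this ▸ hmem)

lemma tot_nonempty (n : ℕ) :
    {m : ℕ | ∃ S : Finset (Fin (n+1) → Bool),
      IsTotalDominatingSet (hypercube (n+1)) S ∧ S.card = m}.Nonempty := by
  classical
  refine ⟨_, Finset.univ, ?_, rfl⟩
  intro v
  refine ⟨Fin.snoc (Fin.init v) (!(v (Fin.last n))), Finset.mem_univ _, ?_⟩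
  show hammingDist v _ = 1
  rw [hamming_snoc', hammingDist_self]
  cases v (Fin.last n) <;> simp

lemma dom_nonempty (n : ℕ) :
    {m : ℕ | ∃ S : Finset (Fin n → Bool),
      IsDominatingSet (hypercube n) S ∧ S.card = m}.Nonempty :=
  ⟨_, Finset.univ, fun v hv => absurd (Finset.mem_univ v) hv, rfl⟩

end Aux

/-- For every `n ≥ 1`, `γ_t(Q_{n+1}) = 2 γ(Q_n)`. -/
theorem totalDomination_hypercube_succ (n : ℕ) (hn : 1 ≤ n) :
    totalDominationNumber (hypercube (n + 1)) = 2 * dominationNumber (hypercube n) := by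
  classical
  apply le_antisymm
  · -- upper bound
    obtain ⟨S, hS, hcard⟩ := Nat.sInf_mem (dom_nonempty n)
    set T := S.image (fun a => (Fin.snoc a false : Fin (n+1) → Bool)) ∪
             S.image (fun a => (Fin.snoc a true : Fin (n+1) → Bool)) with hTdef
    have hTtot : IsTotalDominatingSet (hypercube (n+1)) T := by
      intro v
      by_cases hv : Fin.init v ∈ S
      · refine ⟨Fin.snoc (Fin.init v) (!(v (Fin.last n))), ?_, ?_⟩
        · rw [hTdef, Finset.mem_union]
          cases v (Fin.last n)
          · exact Or.inr (Finset.mem_image_of_mem _ hv)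
          · exact Or.inl (Finset.mem_image_of_mem _ hv)
        · show hammingDist v _ = 1
          rw [hamming_snoc', hammingDist_self]
          cases v (Fin.last n) <;> simp
      · obtain ⟨s, hs, hadj⟩ := hS (Fin.init v) hv
        refine ⟨Fin.snoc s (v (Fin.last n)), ?_, ?_⟩
        · rw [hTdef, Finset.mem_union]
          cases v (Fin.last n)
          · exact Or.inl (Finset.mem_image_of_mem _ hs)
          · exact Or.inr (Finset.mem_image_of_mem _ hs)
        · show hammingDist v _ = 1
          rw [hamming_snoc']
          have : hammingDist (Fin.init v) s = 1 := hadj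
          simp [this]
    have hTcard : T.card = 2 * S.card := by
      rw [hTdef, Finset.card_union_of_disjoint, Finset.card_image_of_injective,
        Finset.card_image_of_injective]
      · ring
      · exact snoc_injective _
      · exact snoc_injective _
      · rw [Finset.disjoint_left]
        rintro x hx hx'
        obtain ⟨a, _, rfl⟩ := Finset.mem_image.mp hx
        obtain ⟨a', _, he⟩ := Finset.mem_image.mp hx'
        have := congrFun he (Fin.last n)
        simp [Fin.snoc_last] at this
    calc totalDominationNumber (hypercube (n+1)) ≤ T.card :=
          Nat.sInf_le ⟨T, hTtot, rfl⟩
      _ = 2 * dominationNumber (hypercube n) := by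
          rw [hTcard, hcard]; rfl
  · -- lower bound
    obtain ⟨T, hT, hcard⟩ := Nat.sInf_mem (tot_nonempty n)
    rw [totalDominationNumber, ← hcard]
    have h0 : dominationNumber (hypercube n) ≤ (T.filter (fun u => par u = 0)).card :=
      le_trans (Nat.sInf_le ⟨_, dom_of_layer n 0 T hT, rfl⟩) Finset.card_image_le
    have h1 : dominationNumber (hypercube n) ≤ (T.filter (fun u => par u = 1)).card :=
      le_trans (Nat.sInf_le ⟨_, dom_of_layer n 1 T hT, rfl⟩) Finset.card_image_le
    have hsplit : (T.filter (fun u => par u = 0)).card +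
        (T.filter (fun u => par u = 1)).card = T.card := by
      have : (T.filter (fun u => par u = 1)) = (T.filter (fun u => ¬ par u = 0)) := by
        apply Finset.filter_congr
        intro u _
        constructor
        · intro h h0'; rw [h0'] at h; exact absurd h (by decide)
        · intro h; exact zmod2_resolve (c := 1) (by simpa [show (1 : ZMod 2) + 1 = 0 from by decide] using h)
      rw [this, Finset.card_filter_add_card_filter_not]
    omega
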